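/- Let 0 = a_0 < a_1 < ⋯ < a_b = 1 and P_k = [a_{k−1}, a_k). Let T : [0,1] → [0,1] be a map whose restriction to each P_k extends to a C² injective function T_k on [a_{k−1}, a_k] with |T_k'(x)| > 2 and |T_k''(x)/T_k'(x)²| ≤ D for all x ∈ [a_{k−1}, a_k]. Let L be the transfer operator: (L f)(x) = Σ_{k : x ∈ T_k(P_k)} f(T_k^{−1}(x)) / |T_k'(T_k^{−1}(x))|. Then for every f : [0,1] → ℝ of bounded variation, Var(L f) ≤ A Var(f) + B ‖f‖_{L¹}, where A = sup_{x} 2/|T'(x)| and B = max_k 2/(a_k − a_{k−1}) + D. -/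

import Mathlib

open Set MeasureTheory Filter Topology

namespace LY



lemma edist_real (x y : ℝ) : edist x y = ENNReal.ofReal |x - y| := by
  rw [edist_dist, Real.dist_eq]

lemma evar_add_le (f g : ℝ → ℝ) (s : Set ℝ) :
    eVariationOn (fun x => f x + g x) s ≤ eVariationOn f s + eVariationOn g s := by
  apply iSup_le
  rintro ⟨n, u, hu, us⟩
  calc ∑ i ∈ Finset.range n,
        edist ((fun x => f x + g x) (u (i+1))) ((fun x => f x + g x) (u i))
      ≤ ∑ i ∈ Finset.range n,
        (edist (f (u (i+1))) (f (u i)) + edist (g (u (i+1))) (g (u i))) :=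
        Finset.sum_le_sum fun i _ => edist_add_add_le _ _ _ _
    _ = (∑ i ∈ Finset.range n, edist (f (u (i+1))) (f (u i)))
        + ∑ i ∈ Finset.range n, edist (g (u (i+1))) (g (u i)) := Finset.sum_add_distrib
    _ ≤ _ := add_le_add (eVariationOn.sum_le (f := f) (n := n) hu us) (eVariationOn.sum_le (f := g) (n := n) hu us)

lemma evar_zero (s : Set ℝ) : eVariationOn (fun _ => (0:ℝ)) s = 0 := by
  apply eVariationOn.constant_on
  intro x hx y hy
  obtain ⟨_, _, rfl⟩ := hx; obtain ⟨_, _, rfl⟩ := hy; rfl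

lemma evar_sum_le (F : ℕ → ℝ → ℝ) (s : Set ℝ) (t : Finset ℕ) :
    eVariationOn (fun x => ∑ k ∈ t, F k x) s ≤ ∑ k ∈ t, eVariationOn (F k) s := by
  classical
  induction t using Finset.induction with
  | empty => simp [evar_zero]
  | @insert a t' h ih =>
      simp only [Finset.sum_insert h]
      exact (evar_add_le _ _ s).trans (add_le_add le_rfl ih)



lemma evar_jump_greatest (φ : ℝ → ℝ) (s : Set ℝ) (p : ℝ)
    (hp : ∀ x ∈ s, x ≤ p) (h0 : ∀ x ∈ s, x ≠ p → φ x = 0) :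
    eVariationOn φ s ≤ ENNReal.ofReal |φ p| := by
  apply iSup_le
  rintro ⟨n, u, hu, us⟩
  dsimp only
  have step : ∀ j, u j = p → u (j+1) = p := fun j hj =>
    le_antisymm (hp _ (us _)) (hj ▸ hu (Nat.le_succ j))
  have stepmany : ∀ j j', j ≤ j' → u j = p → u j' = p := by
    intro j j' hjj' hj
    induction j' with
    | zero => exact (Nat.le_zero.mp hjj') ▸ hj
    | succ m ih =>
        rcases Nat.lt_or_ge j (m+1) with h | h
        · exact step m (ih (by omega))
        · have : j = m + 1 := le_antisymm hjj' h
          exact this ▸ hj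
  by_cases hn : ∃ i ∈ Finset.range n, u i ≠ p ∧ u (i+1) = p
  · obtain ⟨i0, hi0, hne, heq⟩ := hn
    have key : ∀ j ∈ Finset.range n, j ≠ i0 → edist (φ (u (j+1))) (φ (u j)) = 0 := by
      intro j hj hji
      rcases eq_or_ne (u j) p with h | h
      · rw [h, step j h, edist_self]
      · rcases eq_or_ne (u (j+1)) p with h2 | h2
        · exfalso
          rcases lt_or_gt_of_ne hji with hlt | hgt
          · exact hne (stepmany (j+1) i0 (by omega) h2)
          · exact h (stepmany (i0+1) j (by omega) heq)
        · rw [h0 _ (us _) h, h0 _ (us _) h2, edist_self]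
    rw [Finset.sum_eq_single_of_mem i0 hi0 key, heq, h0 _ (us i0) hne, edist_real]
    simp
  · push_neg at hn
    have : ∀ j ∈ Finset.range n, edist (φ (u (j+1))) (φ (u j)) = 0 := by
      intro j hj
      rcases eq_or_ne (u j) p with h | h
      · rw [h, step j h, edist_self]
      · rw [h0 _ (us _) h, h0 _ (us _) (hn j hj h), edist_self]
    rw [Finset.sum_eq_zero this]
    exact zero_le

lemma evar_jump_least (φ : ℝ → ℝ) (s : Set ℝ) (p : ℝ)
    (hp : ∀ x ∈ s, p ≤ x) (h0 : ∀ x ∈ s, x ≠ p → φ x = 0) :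
    eVariationOn φ s ≤ ENNReal.ofReal |φ p| := by
  apply iSup_le
  rintro ⟨n, u, hu, us⟩
  dsimp only
  have step : ∀ j, u (j+1) = p → u j = p := fun j hj =>
    le_antisymm (hj ▸ hu (Nat.le_succ j)) (hp _ (us _))
  have stepmany : ∀ j j', j ≤ j' → u j' = p → u j = p := by
    intro j j' hjj' hj
    induction j' with
    | zero => exact (Nat.le_zero.mp hjj') ▸ hj
    | succ m ih =>
        rcases Nat.lt_or_ge j (m+1) with h | h
        · exact ih (by omega) (step m hj)
        · have : j = m + 1 := le_antisymm hjj' h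
          exact this ▸ hj
  by_cases hn : ∃ i ∈ Finset.range n, u i = p ∧ u (i+1) ≠ p
  · obtain ⟨i0, hi0, heq, hne⟩ := hn
    have key : ∀ j ∈ Finset.range n, j ≠ i0 → edist (φ (u (j+1))) (φ (u j)) = 0 := by
      intro j hj hji
      rcases eq_or_ne (u (j+1)) p with h | h
      · rw [h, step j h, edist_self]
      · rcases eq_or_ne (u j) p with h2 | h2
        · exfalso
          rcases lt_or_gt_of_ne hji with hlt | hgt
          · exact h (stepmany (j+1) i0 (by omega) heq)
          · exact hne (stepmany (i0+1) j (by omega) h2)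
        · rw [h0 _ (us _) h, h0 _ (us _) h2, edist_self]
    rw [Finset.sum_eq_single_of_mem i0 hi0 key, heq, h0 _ (us (i0+1)) hne, edist_real]
    simp
  · push_neg at hn
    have : ∀ j ∈ Finset.range n, edist (φ (u (j+1))) (φ (u j)) = 0 := by
      intro j hj
      rcases eq_or_ne (u (j+1)) p with h | h
      · rw [h, step j h, edist_self]
      · rw [h0 _ (us _) h, h0 _ (us _) (fun h2 => h (hn j hj h2)), edist_self]
    rw [Finset.sum_eq_zero this]
    exact zero_le

lemma Icc_add_Icc' (f : ℝ → ℝ) {x y z : ℝ} (hxy : x ≤ y) (hyz : y ≤ z) :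
    eVariationOn f (Icc x y) + eVariationOn f (Icc y z) = eVariationOn f (Icc x z) := by
  have := eVariationOn.Icc_add_Icc f (s := univ) hxy hyz (mem_univ y)
  simpa using this

lemma sum_evar_Icc_le (f : ℝ → ℝ) {v : ℕ → ℝ} (hv : Monotone v) {x y : ℝ} :
    ∀ M : ℕ, x ≤ v 0 → v M ≤ y →
    ∑ j ∈ Finset.range M, eVariationOn f (Icc (v j) (v (j+1))) ≤ eVariationOn f (Icc x y) := by
  intro M
  induction M generalizing y with
  | zero => intro _ _; simp
  | succ M ih =>
      intro h0 hM
      rw [Finset.sum_range_succ]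
      have hvM : v M ≤ y := le_trans (hv (Nat.le_succ M)) hM
      have hxvM : x ≤ v M := le_trans h0 (hv (Nat.zero_le M))
      calc (∑ j ∈ Finset.range M, eVariationOn f (Icc (v j) (v (j+1))))
            + eVariationOn f (Icc (v M) (v (M+1)))
          ≤ eVariationOn f (Icc x (v M)) + eVariationOn f (Icc (v M) y) := by
            refine add_le_add (ih (y := v M) h0 le_rfl) (eVariationOn.mono f ?_)
            exact Icc_subset_Icc le_rfl hM
        _ = eVariationOn f (Icc x y) := Icc_add_Icc' f hxvM hvM

lemma key_two_point (f w : ℝ → ℝ) {s Dw x y : ℝ} (hxy : x ≤ y)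
    (hw : ∀ t ∈ Icc x y, |w t| ≤ s)
    (hwl : ∀ t₁ ∈ Icc x y, ∀ t₂ ∈ Icc x y, |w t₂ - w t₁| ≤ Dw * |t₂ - t₁|)
    (hDw : 0 ≤ Dw)
    (hfv : BoundedVariationOn f (Icc x y))
    (hfi : IntegrableOn f (Icc x y)) :
    |f y * w y - f x * w x| ≤
      s * (eVariationOn f (Icc x y)).toReal + Dw * ∫ t in Icc x y, |f t| := by
  set V := (eVariationOn f (Icc x y)).toReal with hV
  set I := ∫ t in Icc x y, |f t| with hI
  have hVnn : 0 ≤ V := ENNReal.toReal_nonneg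
  apply le_of_forall_pos_le_add
  intro ε hε
  obtain ⟨M0, hM0⟩ := exists_nat_gt (Dw * (y - x) * V / ε)
  set M : ℕ := max M0 1 with hMdef
  have hM1 : 1 ≤ M := le_max_right _ _
  have hMpos : (0:ℝ) < M := by exact_mod_cast Nat.lt_of_lt_of_le Nat.zero_lt_one hM1
  have hMgt : Dw * (y - x) * V / ε < M := by
    refine lt_of_lt_of_le hM0 ?_
    exact_mod_cast le_max_left M0 1
  set Δ : ℝ := (y - x) / M with hΔ
  have hΔnn : 0 ≤ Δ := div_nonneg (by linarith) hMpos.le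
  set v : ℕ → ℝ := fun j => x + j * Δ with hvdef
  have hvmono : Monotone v := by
    intro i j hij
    have : (i:ℝ) ≤ j := by exact_mod_cast hij
    simp only [hvdef]
    nlinarith
  have hv0 : v 0 = x := by simp [hvdef]
  have hvM : v M = y := by
    simp only [hvdef, hΔ]
    field_simp
    ring
  have hvmem : ∀ j ≤ M, v j ∈ Icc x y := by
    intro j hj
    constructor
    · simp only [hvdef]
      have : (0:ℝ) ≤ (j:ℝ) := Nat.cast_nonneg j
      nlinarith
    · rw [← hvM]; exact hvmono hj
  have hstep : ∀ j : ℕ, v (j+1) - v j = Δ := by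
    intro j; simp only [hvdef]; push_cast; ring
  -- telescoping
  have tele : f y * w y - f x * w x
      = ∑ j ∈ Finset.range M, (f (v (j+1)) * w (v (j+1)) - f (v j) * w (v j)) := by
    rw [Finset.sum_range_sub (fun j => f (v j) * w (v j)) M, hvM, hv0]
  -- cell quantities
  set Vc : ℕ → ℝ := fun j => (eVariationOn f (Icc (v j) (v (j+1)))).toReal with hVc
  set Ic : ℕ → ℝ := fun j => ∫ t in Icc (v j) (v (j+1)), |f t| with hIc
  have hcellsub : ∀ j < M, Icc (v j) (v (j+1)) ⊆ Icc x y := by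
    intro j hj
    exact Icc_subset_Icc (hvmem j (le_of_lt hj)).1 (hvmem (j+1) hj).2
  have hcellle : ∀ j : ℕ, v j ≤ v (j+1) := fun j => hvmono (Nat.le_succ j)
  -- per-cell bound
  have bound : ∀ j < M, |f (v (j+1)) * w (v (j+1)) - f (v j) * w (v j)|
      ≤ s * |f (v (j+1)) - f (v j)| + Dw * (Ic j + Vc j * Δ) := by
    intro j hj
    set a := v j
    set bb := v (j+1)
    have hab : a ≤ bb := hcellle j
    have hsub : Icc a bb ⊆ Icc x y := hcellsub j hj
    have ha : a ∈ Icc x y := hvmem j (le_of_lt hj)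
    have hb : bb ∈ Icc x y := hvmem (j+1) hj
    have hfi' : IntegrableOn f (Icc a bb) := hfi.mono_set hsub
    have hfv' : BoundedVariationOn f (Icc a bb) := hfv.mono hsub
    have hsplit : f bb * w bb - f a * w a = w bb * (f bb - f a) + f a * (w bb - w a) := by ring
    have hwb : |w bb| ≤ s := hw bb hb
    have hWlip : |w bb - w a| ≤ Dw * Δ := by
      have := hwl a ha bb hb
      rwa [show |bb - a| = Δ by rw [abs_of_nonneg]; exact hstep j; rw [hstep j]; exact hΔnn] at this
    have est2 : |f a| * Δ ≤ Ic j + Vc j * Δ := by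
      have hptw : ∀ t ∈ Icc a bb, |f a| ≤ |f t| + Vc j := by
        intro t ht
        have hd : dist (f a) (f t) ≤ Vc j := hfv'.dist_le ⟨le_rfl, hab⟩ ht
        have h1 : |f a| - |f t| ≤ |f a - f t| := abs_sub_abs_le_abs_sub _ _
        rw [← Real.dist_eq] at h1
        linarith
      have hconstInt : IntegrableOn (fun _ : ℝ => |f a|) (Icc a bb) := by
        refine integrableOn_const ?_
        rw [Real.volume_Icc]; exact ENNReal.ofReal_ne_top
      have hconstInt2 : IntegrableOn (fun _ : ℝ => Vc j) (Icc a bb) := by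
        refine integrableOn_const ?_
        rw [Real.volume_Icc]; exact ENNReal.ofReal_ne_top
      have hvol : volume.real (Icc a bb) = Δ := by
        rw [measureReal_def, Real.volume_Icc, ENNReal.toReal_ofReal]
        · rw [hstep j]
        · rw [hstep j]; exact hΔnn
      calc |f a| * Δ = ∫ _ in Icc a bb, |f a| := by
            rw [setIntegral_const, smul_eq_mul, hvol, mul_comm]
        _ ≤ ∫ t in Icc a bb, (|f t| + Vc j) := by
            refine setIntegral_mono_on hconstInt (hfi'.abs.add hconstInt2) measurableSet_Icc hptw
        _ = Ic j + Vc j * Δ := by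
            rw [integral_add hfi'.abs hconstInt2, setIntegral_const, smul_eq_mul, hvol]
            show Ic j + Δ * Vc j = Ic j + Vc j * Δ
            ring
    calc |f bb * w bb - f a * w a| = |w bb * (f bb - f a) + f a * (w bb - w a)| := by rw [hsplit]
      _ ≤ |w bb * (f bb - f a)| + |f a * (w bb - w a)| := abs_add_le _ _
      _ = |w bb| * |f bb - f a| + |f a| * |w bb - w a| := by rw [abs_mul, abs_mul]
      _ ≤ s * |f bb - f a| + |f a| * (Dw * Δ) := by
          refine add_le_add (mul_le_mul_of_nonneg_right hwb (abs_nonneg _))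
            (mul_le_mul_of_nonneg_left hWlip (abs_nonneg _))
      _ = s * |f bb - f a| + Dw * (|f a| * Δ) := by ring
      _ ≤ s * |f bb - f a| + Dw * (Ic j + Vc j * Δ) := by
          refine add_le_add le_rfl (mul_le_mul_of_nonneg_left est2 hDw)
  -- sums
  have hdistcell : ∀ j < M, |f (v (j+1)) - f (v j)| ≤ Vc j := by
    intro j hj
    have hfv' : BoundedVariationOn f (Icc (v j) (v (j+1))) := hfv.mono (hcellsub j hj)
    have := hfv'.dist_le (x := v (j+1)) (y := v j) ⟨hcellle j, le_rfl⟩ ⟨le_rfl, hcellle j⟩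
    rwa [Real.dist_eq] at this
  have hVcsum : ∑ j ∈ Finset.range M, Vc j ≤ V := by
    have hE : ∑ j ∈ Finset.range M, eVariationOn f (Icc (v j) (v (j+1)))
        ≤ eVariationOn f (Icc x y) := sum_evar_Icc_le f hvmono M (le_of_eq hv0.symm) (le_of_eq hvM)
    have hne : ∀ j ∈ Finset.range M, eVariationOn f (Icc (v j) (v (j+1))) ≠ ⊤ := by
      intro j hj
      exact ne_top_of_le_ne_top hfv (eVariationOn.mono f (hcellsub j (Finset.mem_range.mp hj)))
    rw [hV]
    rw [show (∑ j ∈ Finset.range M, Vc j)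
        = (∑ j ∈ Finset.range M, eVariationOn f (Icc (v j) (v (j+1)))).toReal from
        (ENNReal.toReal_sum hne).symm]
    exact ENNReal.toReal_mono hfv hE
  have hIcsum : ∑ j ∈ Finset.range M, Ic j = I := by
    have hii : ∀ k < M, IntervalIntegrable (fun t => |f t|) volume (v k) (v (k+1)) := by
      intro k hk
      have h1 : IntegrableOn (fun t => |f t|) (Icc (v k) (v (k+1))) :=
        (hfi.mono_set (hcellsub k hk)).abs
      have h2 : Set.uIcc (v k) (v (k+1)) = Icc (v k) (v (k+1)) := uIcc_of_le (hcellle k)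
      exact (h2 ▸ h1).intervalIntegrable
    have := intervalIntegral.sum_integral_adjacent_intervals hii
    have hIceq : ∀ j ∈ Finset.range M, Ic j = ∫ t in (v j)..(v (j+1)), |f t| := by
      intro j hj
      rw [intervalIntegral.integral_of_le (hcellle j)]
      exact integral_Icc_eq_integral_Ioc
    rw [Finset.sum_congr rfl hIceq, this, hv0, hvM, hI,
      intervalIntegral.integral_of_le hxy, integral_Icc_eq_integral_Ioc]
  have hs : 0 ≤ s := le_trans (abs_nonneg _) (hw x ⟨le_rfl, hxy⟩)
  have hInn : 0 ≤ I := setIntegral_nonneg measurableSet_Icc (fun t _ => abs_nonneg _)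
  have hfinal : Dw * Δ * V ≤ ε := by
    have h1 : Dw * (y - x) * V < M * ε := by
      rw [div_lt_iff₀ hε] at hMgt; linarith
    have h2 : Dw * Δ * V = Dw * (y - x) * V / M := by rw [hΔ]; ring
    rw [h2, div_le_iff₀ hMpos]
    nlinarith
  calc |f y * w y - f x * w x|
      = |∑ j ∈ Finset.range M, (f (v (j+1)) * w (v (j+1)) - f (v j) * w (v j))| := by rw [tele]
    _ ≤ ∑ j ∈ Finset.range M, |f (v (j+1)) * w (v (j+1)) - f (v j) * w (v j)| :=
        Finset.abs_sum_le_sum_abs _ _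
    _ ≤ ∑ j ∈ Finset.range M, (s * |f (v (j+1)) - f (v j)| + Dw * (Ic j + Vc j * Δ)) :=
        Finset.sum_le_sum (fun j hj => bound j (Finset.mem_range.mp hj))
    _ ≤ ∑ j ∈ Finset.range M, (s * Vc j + Dw * (Ic j + Vc j * Δ)) := by
        refine Finset.sum_le_sum (fun j hj => ?_)
        have := hdistcell j (Finset.mem_range.mp hj)
        nlinarith [mul_le_mul_of_nonneg_left this hs]
    _ = s * (∑ j ∈ Finset.range M, Vc j) + Dw * (∑ j ∈ Finset.range M, Ic j)
        + Dw * Δ * (∑ j ∈ Finset.range M, Vc j) := by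
        rw [Finset.mul_sum, Finset.mul_sum, Finset.mul_sum, ← Finset.sum_add_distrib,
          ← Finset.sum_add_distrib]
        refine Finset.sum_congr rfl (fun j _ => by ring)
    _ ≤ s * V + Dw * I + Dw * Δ * V := by
        have h1 : s * (∑ j ∈ Finset.range M, Vc j) ≤ s * V :=
          mul_le_mul_of_nonneg_left hVcsum hs
        have h2 : Dw * Δ * (∑ j ∈ Finset.range M, Vc j) ≤ Dw * Δ * V :=
          mul_le_mul_of_nonneg_left hVcsum (by positivity)
        rw [hIcsum]
        linarith
    _ ≤ s * V + Dw * I + ε := by linarith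



lemma evar_mul_le (f w : ℝ → ℝ) {s Dw α β : ℝ} (hαβ : α ≤ β)
    (hw : ∀ t ∈ Icc α β, |w t| ≤ s)
    (hwl : ∀ t₁ ∈ Icc α β, ∀ t₂ ∈ Icc α β, |w t₂ - w t₁| ≤ Dw * |t₂ - t₁|)
    (hDw : 0 ≤ Dw)
    (hfv : BoundedVariationOn f (Icc α β)) (hfi : IntegrableOn f (Icc α β)) :
    eVariationOn (fun t => f t * w t) (Icc α β) ≤
      ENNReal.ofReal (s * (eVariationOn f (Icc α β)).toReal + Dw * ∫ t in Icc α β, |f t|) := by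
  have hs : 0 ≤ s := le_trans (abs_nonneg _) (hw α ⟨le_rfl, hαβ⟩)
  apply iSup_le
  rintro ⟨n, u, hu, us⟩
  dsimp only
  set V : ℕ → ℝ := fun i => (eVariationOn f (Icc (u i) (u (i+1)))).toReal with hV
  set I : ℕ → ℝ := fun i => ∫ t in Icc (u i) (u (i+1)), |f t| with hI
  have hsub : ∀ i : ℕ, Icc (u i) (u (i+1)) ⊆ Icc α β := fun i =>
    Icc_subset_Icc (us i).1 (us (i+1)).2
  have hle : ∀ i : ℕ, u i ≤ u (i+1) := fun i => hu (Nat.le_succ i)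
  have key : ∀ i : ℕ, edist ((fun t => f t * w t) (u (i+1))) ((fun t => f t * w t) (u i))
      ≤ ENNReal.ofReal (s * V i + Dw * I i) := by
    intro i
    rw [edist_real]
    apply ENNReal.ofReal_le_ofReal
    have := key_two_point f w (hle i)
      (fun t ht => hw t (hsub i ht))
      (fun t₁ h₁ t₂ h₂ => hwl t₁ (hsub i h₁) t₂ (hsub i h₂))
      hDw (hfv.mono (hsub i)) (hfi.mono_set (hsub i))
    exact this
  calc ∑ i ∈ Finset.range n, edist ((fun t => f t * w t) (u (i+1))) ((fun t => f t * w t) (u i))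
      ≤ ∑ i ∈ Finset.range n, ENNReal.ofReal (s * V i + Dw * I i) :=
        Finset.sum_le_sum (fun i _ => key i)
    _ = ENNReal.ofReal (∑ i ∈ Finset.range n, (s * V i + Dw * I i)) := by
        rw [ENNReal.ofReal_sum_of_nonneg]
        intro i _
        have hVnn : 0 ≤ V i := ENNReal.toReal_nonneg
        have hInn : 0 ≤ I i := setIntegral_nonneg measurableSet_Icc (fun t _ => abs_nonneg _)
        positivity
    _ ≤ ENNReal.ofReal (s * (eVariationOn f (Icc α β)).toReal + Dw * ∫ t in Icc α β, |f t|) := by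
        apply ENNReal.ofReal_le_ofReal
        have hVsum : ∑ i ∈ Finset.range n, V i ≤ (eVariationOn f (Icc α β)).toReal := by
          have hE : ∑ i ∈ Finset.range n, eVariationOn f (Icc (u i) (u (i+1)))
              ≤ eVariationOn f (Icc α β) := sum_evar_Icc_le f hu n (us 0).1 (us n).2
          have hne : ∀ i ∈ Finset.range n, eVariationOn f (Icc (u i) (u (i+1))) ≠ ⊤ :=
            fun i _ => ne_top_of_le_ne_top hfv (eVariationOn.mono f (hsub i))
          rw [show (∑ i ∈ Finset.range n, V i)
              = (∑ i ∈ Finset.range n, eVariationOn f (Icc (u i) (u (i+1)))).toReal from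
              (ENNReal.toReal_sum hne).symm]
          exact ENNReal.toReal_mono hfv hE
        have hIsum : ∑ i ∈ Finset.range n, I i ≤ ∫ t in Icc α β, |f t| := by
          have hii : ∀ k < n, IntervalIntegrable (fun t => |f t|) volume (u k) (u (k+1)) := by
            intro k _
            have h1 : IntegrableOn (fun t => |f t|) (Icc (u k) (u (k+1))) :=
              (hfi.mono_set (hsub k)).abs
            have h2 : Set.uIcc (u k) (u (k+1)) = Icc (u k) (u (k+1)) := uIcc_of_le (hle k)
            exact (h2 ▸ h1).intervalIntegrable
          have hadj := intervalIntegral.sum_integral_adjacent_intervals hii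
          have hIceq : ∀ i ∈ Finset.range n, I i = ∫ t in (u i)..(u (i+1)), |f t| := by
            intro i _
            rw [intervalIntegral.integral_of_le (hle i)]
            exact integral_Icc_eq_integral_Ioc
          rw [Finset.sum_congr rfl hIceq, hadj, intervalIntegral.integral_of_le (hu (Nat.zero_le n))]
          rw [integral_Icc_eq_integral_Ioc]
          have hint : IntegrableOn (fun t => |f t|) (Ioc α β) :=
            IntegrableOn.mono_set hfi.abs Ioc_subset_Icc_self
          apply setIntegral_mono_set hint
          · exact Filter.Eventually.of_forall (fun t => abs_nonneg _)
          · exact (Ioc_subset_Ioc (us 0).1 (us n).2).eventuallyLE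
        have hInn : ∀ i, 0 ≤ I i := fun i =>
          setIntegral_nonneg measurableSet_Icc (fun t _ => abs_nonneg _)
        have h1 : ∑ i ∈ Finset.range n, (s * V i + Dw * I i)
            = s * (∑ i ∈ Finset.range n, V i) + Dw * (∑ i ∈ Finset.range n, I i) := by
          rw [Finset.sum_add_distrib, Finset.mul_sum, Finset.mul_sum]
        rw [h1]
        have := mul_le_mul_of_nonneg_left hVsum hs
        have := mul_le_mul_of_nonneg_left hIsum hDw
        linarith

lemma evar_zero_on {g : ℝ → ℝ} {s : Set ℝ} (h : ∀ x ∈ s, g x = 0) :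
    eVariationOn g s = 0 := by
  apply eVariationOn.constant_on
  rintro _ ⟨x, hx, rfl⟩ _ ⟨y, hy, rfl⟩
  rw [h x hx, h y hy]

lemma three_point (f : ℝ → ℝ) {p q z : ℝ} (hz : z ∈ Icc p q)
    (hfv : BoundedVariationOn f (Icc p q)) :
    |f p - f z| + |f z - f q| ≤ (eVariationOn f (Icc p q)).toReal := by
  set u : ℕ → ℝ := fun n => if n = 0 then p else if n = 1 then z else q with hu
  have hpq : p ≤ q := le_trans hz.1 hz.2
  have humono : Monotone u := by
    intro i j hij
    rcases eq_or_ne i 0 with h0 | h0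
    · subst h0
      rcases eq_or_ne j 0 with h1 | h1
      · simp [hu, h1]
      · rcases eq_or_ne j 1 with h2 | h2 <;> simp [hu, h1, h2, hz.1, hpq]
    · rcases eq_or_ne i 1 with h1 | h1
      · subst h1
        rcases eq_or_ne j 0 with h2 | h2
        · omega
        · rcases eq_or_ne j 1 with h3 | h3 <;> simp [hu, h2, h3, hz.2]
      · have hj0 : j ≠ 0 := by omega
        have hj1 : j ≠ 1 := by omega
        simp [hu, h0, h1, hj0, hj1]
  have humem : ∀ i, u i ∈ Icc p q := by
    intro i
    rcases eq_or_ne i 0 with h0 | h0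
    · simp [hu, h0, hpq]
    · rcases eq_or_ne i 1 with h1 | h1
      · simp [hu, h0, h1, hz.1, hz.2]
      · simp [hu, h0, h1, hpq]
  have hsum := eVariationOn.sum_le (f := f) (n := 2) humono humem
  have hexp : ∑ i ∈ Finset.range 2, edist (f (u (i+1))) (f (u i))
      = ENNReal.ofReal |f z - f p| + ENNReal.ofReal |f q - f z| := by
    rw [Finset.sum_range_succ, Finset.sum_range_one]
    rw [show u 0 = p from rfl, show u 1 = z from rfl, show u 2 = q from rfl,
      edist_real, edist_real]
  rw [hexp, ← ENNReal.ofReal_add (abs_nonneg _) (abs_nonneg _)] at hsum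
  have := ENNReal.toReal_mono hfv hsum
  rw [ENNReal.toReal_ofReal (by positivity)] at this
  calc |f p - f z| + |f z - f q| = |f z - f p| + |f q - f z| := by
        rw [abs_sub_comm (f p) (f z), abs_sub_comm (f z) (f q)]
    _ ≤ _ := this

lemma boundary_bound (f : ℝ → ℝ) {p q A wp wq : ℝ} (hpq : p < q)
    (hfv : BoundedVariationOn f (Icc p q)) (hfi : IntegrableOn f (Icc p q))
    (hwp : 0 ≤ wp) (hwp2 : wp ≤ 1/2) (hwpA : wp ≤ A/2)
    (hwq : 0 ≤ wq) (hwq2 : wq ≤ 1/2) (hwqA : wq ≤ A/2) :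
    |f p| * wp + |f q| * wq ≤
      (A/2) * (eVariationOn f (Icc p q)).toReal + (2/(q-p)) * ∫ t in Icc p q, |f t| := by
  have hvol0 : volume (Icc p q) ≠ 0 := by
    rw [Real.volume_Icc]
    simp only [ne_eq, ENNReal.ofReal_eq_zero, not_le]
    linarith
  have hvolt : volume (Icc p q) ≠ ⊤ := by
    rw [Real.volume_Icc]; exact ENNReal.ofReal_ne_top
  obtain ⟨z, hz, hzle⟩ := exists_le_setAverage hvol0 hvolt hfi.abs
  rw [setAverage_eq, measureReal_def, Real.volume_Icc, ENNReal.toReal_ofReal (by linarith), smul_eq_mul] at hzle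
  have hInn : 0 ≤ ∫ t in Icc p q, |f t| :=
    setIntegral_nonneg measurableSet_Icc (fun t _ => abs_nonneg _)
  have h3 := three_point f hz hfv
  have hVnn : (0:ℝ) ≤ (eVariationOn f (Icc p q)).toReal := ENNReal.toReal_nonneg
  have hfp : |f p| ≤ |f z| + |f p - f z| := by
    have := abs_sub_abs_le_abs_sub (f p) (f z); linarith [abs_nonneg (f p - f z)]
  have hfq : |f q| ≤ |f z| + |f z - f q| := by
    have h1 : |f q| - |f z| ≤ |f q - f z| := abs_sub_abs_le_abs_sub _ _
    rw [abs_sub_comm] at h1; linarith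
  have e1 : |f p| * wp ≤ (1/2) * |f z| + (A/2) * |f p - f z| := by
    calc |f p| * wp ≤ (|f z| + |f p - f z|) * wp :=
          mul_le_mul_of_nonneg_right hfp hwp
      _ = |f z| * wp + |f p - f z| * wp := by ring
      _ ≤ (1/2) * |f z| + (A/2) * |f p - f z| := by
          refine add_le_add ?_ ?_
          · rw [mul_comm]; exact mul_le_mul_of_nonneg_right hwp2 (abs_nonneg _)
          · rw [mul_comm]; exact mul_le_mul_of_nonneg_right hwpA (abs_nonneg _)
  have e2 : |f q| * wq ≤ (1/2) * |f z| + (A/2) * |f z - f q| := by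
    calc |f q| * wq ≤ (|f z| + |f z - f q|) * wq :=
          mul_le_mul_of_nonneg_right hfq hwq
      _ = |f z| * wq + |f z - f q| * wq := by ring
      _ ≤ (1/2) * |f z| + (A/2) * |f z - f q| := by
          refine add_le_add ?_ ?_
          · rw [mul_comm]; exact mul_le_mul_of_nonneg_right hwq2 (abs_nonneg _)
          · rw [mul_comm]; exact mul_le_mul_of_nonneg_right hwqA (abs_nonneg _)
  have hA0 : 0 ≤ A/2 := le_trans hwp hwpA
  have hzbound : |f z| ≤ (q - p)⁻¹ * ∫ t in Icc p q, |f t| := hzle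
  have hinv : (q - p)⁻¹ ≤ 2 / (q - p) := by
    rw [div_eq_mul_inv]
    nlinarith [inv_nonneg.mpr (le_of_lt (show (0:ℝ) < q - p by linarith))]
  calc |f p| * wp + |f q| * wq
      ≤ |f z| + (A/2) * (|f p - f z| + |f z - f q|) := by linarith
    _ ≤ (q - p)⁻¹ * (∫ t in Icc p q, |f t|) + (A/2) * (eVariationOn f (Icc p q)).toReal := by
        have := mul_le_mul_of_nonneg_left h3 hA0
        linarith
    _ ≤ (A/2) * (eVariationOn f (Icc p q)).toReal + (2/(q-p)) * ∫ t in Icc p q, |f t| := by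
        have := mul_le_mul_of_nonneg_right hinv hInn
        nlinarith [mul_le_mul_of_nonneg_right hinv hInn]

lemma inv_abs_lipschitz {φ : ℝ → ℝ} {p q D : ℝ} (hpq : p ≤ q)
    (hφdiff : DifferentiableOn ℝ φ (Icc p q))
    (hne : ∀ x ∈ Icc p q, φ x ≠ 0)
    (hDist : ∀ x ∈ Icc p q, |derivWithin φ (Icc p q) x / (φ x)^2| ≤ D)
    (hsign : (∀ x ∈ Icc p q, 0 < φ x) ∨ (∀ x ∈ Icc p q, φ x < 0)) :
    ∀ x₁ ∈ Icc p q, ∀ x₂ ∈ Icc p q, |(|φ x₂|)⁻¹ - (|φ x₁|)⁻¹| ≤ D * |x₂ - x₁| := by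
  have hconv : Convex ℝ (Icc p q) := convex_Icc p q
  rcases hsign with hpos | hneg
  · set k : ℝ → ℝ := fun x => (φ x)⁻¹ with hk
    have hkd : ∀ x ∈ Icc p q, HasDerivWithinAt k
        (-(derivWithin φ (Icc p q) x) / (φ x)^2) (Icc p q) x := by
      intro x hx
      exact ((hφdiff x hx).hasDerivWithinAt).inv (hne x hx)
    have hbound : ∀ x ∈ Icc p q, ‖-(derivWithin φ (Icc p q) x) / (φ x)^2‖ ≤ D := by
      intro x hx
      rw [Real.norm_eq_abs, neg_div, abs_neg]
      exact hDist x hx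
    intro x₁ h₁ x₂ h₂
    have := hconv.norm_image_sub_le_of_norm_hasDerivWithin_le hkd hbound h₁ h₂
    rw [Real.norm_eq_abs, Real.norm_eq_abs] at this
    rwa [abs_of_pos (hpos x₂ h₂), abs_of_pos (hpos x₁ h₁)]
  · set k : ℝ → ℝ := fun x => -(φ x)⁻¹ with hk
    have hkd : ∀ x ∈ Icc p q, HasDerivWithinAt k
        ((derivWithin φ (Icc p q) x) / (φ x)^2) (Icc p q) x := by
      intro x hx
      have := (((hφdiff x hx).hasDerivWithinAt).inv (hne x hx)).neg
      rw [neg_div, neg_neg] at this; exact this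
    have hbound : ∀ x ∈ Icc p q, ‖(derivWithin φ (Icc p q) x) / (φ x)^2‖ ≤ D := by
      intro x hx
      rw [Real.norm_eq_abs]
      exact hDist x hx
    intro x₁ h₁ x₂ h₂
    have := hconv.norm_image_sub_le_of_norm_hasDerivWithin_le hkd hbound h₁ h₂
    rw [Real.norm_eq_abs, Real.norm_eq_abs] at this
    rw [abs_of_neg (hneg x₂ h₂), abs_of_neg (hneg x₁ h₁)]
    rw [hk] at this
    simp only [sub_neg_eq_add] at this ⊢
    simpa [inv_neg, sub_eq_add_neg, add_comm] using this

lemma branch_bound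
    (f : ℝ → ℝ) {p q : ℝ} (hpq : p < q)
    (Tb Sb : ℝ → ℝ) {D A : ℝ}
    (hC2 : ContDiffOn ℝ 2 Tb (Icc p q))
    (hExp : ∀ x ∈ Icc p q, 2 < |derivWithin Tb (Icc p q) x|)
    (hDist : ∀ x ∈ Icc p q, |derivWithin (derivWithin Tb (Icc p q)) (Icc p q) x /
        (derivWithin Tb (Icc p q) x) ^ 2| ≤ D)
    (hS : ∀ x ∈ Icc p q, Sb (Tb x) = x)
    (hmaps : ∀ x ∈ Ico p q, Tb x ∈ Ico (0:ℝ) 1)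
    (hA : ∀ x ∈ Icc p q, 2 / |derivWithin Tb (Icc p q) x| ≤ A)
    (hD : 0 ≤ D)
    (hfv : BoundedVariationOn f (Icc p q))
    (hfi : IntegrableOn f (Icc p q)) :
    eVariationOn ((Tb '' Ico p q).indicator
        (fun y => f (Sb y) / |derivWithin Tb (Icc p q) (Sb y)|)) (Icc 0 1) ≤
      ENNReal.ofReal (A * (eVariationOn f (Icc p q)).toReal
        + (D + 2/(q - p)) * ∫ t in Icc p q, |f t|) := by
  have hpq' : p ≤ q := hpq.le
  set φ : ℝ → ℝ := derivWithin Tb (Icc p q) with hφdef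
  set wf : ℝ → ℝ := fun x => |φ x|⁻¹ with hwfdef
  set g : ℝ → ℝ := (Tb '' Ico p q).indicator (fun y => f (Sb y) / |φ (Sb y)|) with hgdef
  set V : ℝ := (eVariationOn f (Icc p q)).toReal with hVdef
  set It : ℝ := ∫ t in Icc p q, |f t| with hItdef
  have hUD : UniqueDiffOn ℝ (Icc p q) := uniqueDiffOn_Icc hpq
  have hcont : ContinuousOn Tb (Icc p q) := hC2.continuousOn
  have hφcont : ContinuousOn φ (Icc p q) :=
    hC2.continuousOn_derivWithin hUD (by norm_num)
  have hφC1 : ContDiffOn ℝ 1 φ (Icc p q) := hC2.derivWithin hUD (by norm_num)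
  have hφdiff : DifferentiableOn ℝ φ (Icc p q) := hφC1.differentiableOn (by norm_num)
  have hTdiff : DifferentiableOn ℝ Tb (Icc p q) := hC2.differentiableOn (by norm_num)
  have hφne : ∀ x ∈ Icc p q, φ x ≠ 0 := by
    intro x hx h
    have := hExp x hx
    rw [h] at this
    simp at this
    linarith
  have hpmem : p ∈ Icc p q := ⟨le_rfl, hpq'⟩
  have hqmem : q ∈ Icc p q := ⟨hpq', le_rfl⟩
  have hwnn : ∀ x, 0 ≤ wf x := fun x => by positivity
  have hwhalf : ∀ x ∈ Icc p q, wf x ≤ 1/2 := by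
    intro x hx
    have h2 : (2:ℝ) < |φ x| := hExp x hx
    have : (|φ x|)⁻¹ ≤ (2:ℝ)⁻¹ := by
      apply inv_anti₀ (by norm_num) h2.le
    simpa [hwfdef] using this.trans (by norm_num)
  have hwA : ∀ x ∈ Icc p q, wf x ≤ A/2 := by
    intro x hx
    have := hA x hx
    rw [div_eq_mul_inv] at this
    simp only [hwfdef]
    linarith
  have hA0 : 0 ≤ A := by
    refine le_trans ?_ (hA p hpmem)
    positivity
  have hVnn : 0 ≤ V := ENNReal.toReal_nonneg
  have hItnn : 0 ≤ It := setIntegral_nonneg measurableSet_Icc (fun t _ => abs_nonneg _)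
  have hTbq01 : Tb q ∈ Icc (0:ℝ) 1 := by
    have hqcl : q ∈ closure (Ico p q) := by
      rw [closure_Ico hpq.ne]; exact hqmem
    haveI : (𝓝[Ico p q] q).NeBot := mem_closure_iff_nhdsWithin_neBot.mp hqcl
    have hts : Filter.Tendsto Tb (𝓝[Ico p q] q) (𝓝 (Tb q)) :=
      ((hcont q hqmem).mono Ico_subset_Icc_self)
    constructor
    · exact ge_of_tendsto hts (eventually_mem_nhdsWithin.mono fun x hx => (hmaps x hx).1)
    · exact le_of_tendsto hts (eventually_mem_nhdsWithin.mono fun x hx => (hmaps x hx).2.le)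
  have hTbp01 : Tb p ∈ Ico (0:ℝ) 1 := hmaps p ⟨le_rfl, hpq⟩
  have hsign : (∀ x ∈ Icc p q, 2 < φ x) ∨ (∀ x ∈ Icc p q, φ x < -2) := by
    by_cases hc : ∀ x ∈ Icc p q, 2 < φ x
    · exact Or.inl hc
    · right
      push_neg at hc
      obtain ⟨x₀, hx₀, hx₀le⟩ := hc
      have hx₀neg : φ x₀ < -2 := by
        rcases le_or_gt (φ x₀) 0 with h | h
        · have := hExp x₀ hx₀
          rw [abs_of_nonpos h] at this
          linarith
        · have := hExp x₀ hx₀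
          rw [abs_of_pos h] at this
          linarith
      intro x hx
      by_contra hxc
      have hxpos : 2 < φ x := by
        have := hExp x hx
        rcases le_or_gt (φ x) 0 with h | h
        · rw [abs_of_nonpos h] at this; linarith
        · rw [abs_of_pos h] at this; exact this
      have hsub := (isPreconnected_Icc (a := p) (b := q)).intermediate_value hx₀ hx hφcont
      have h0mem : (0:ℝ) ∈ Icc (φ x₀) (φ x) := ⟨by linarith, by linarith⟩
      obtain ⟨z, hz, hz0⟩ := hsub h0mem
      exact hφne z hz hz0
  -- the product-variation bound, common to both cases
  have hwabs : ∀ t ∈ Icc p q, |wf t| ≤ A/2 := fun t ht => by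
    rw [abs_of_nonneg (hwnn t)]; exact hwA t ht
  have hsign' : (∀ x ∈ Icc p q, 0 < φ x) ∨ (∀ x ∈ Icc p q, φ x < 0) := by
    rcases hsign with h | h
    · exact Or.inl (fun x hx => by linarith [h x hx])
    · exact Or.inr (fun x hx => by linarith [h x hx])
  have hwlip : ∀ x₁ ∈ Icc p q, ∀ x₂ ∈ Icc p q, |wf x₂ - wf x₁| ≤ D * |x₂ - x₁| :=
    fun x₁ h₁ x₂ h₂ => inv_abs_lipschitz hpq' hφdiff hφne hDist hsign' x₁ h₁ x₂ h₂
  have hmul : eVariationOn (fun t => f t * wf t) (Icc p q) ≤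
      ENNReal.ofReal ((A/2) * V + D * It) :=
    evar_mul_le f wf hpq' hwabs hwlip hD hfv hfi
  have hbd : |f p| * wf p + |f q| * wf q ≤ (A/2) * V + (2/(q-p)) * It :=
    boundary_bound f hpq hfv hfi (hwnn p) (hwhalf p hpmem) (hwA p hpmem)
      (hwnn q) (hwhalf q hqmem) (hwA q hqmem)
  -- G : the composed function
  set G : ℝ → ℝ := (fun x => f x * wf x) ∘ Sb with hGdef
  have hn1 : 0 ≤ |f p| * wf p := mul_nonneg (abs_nonneg _) (hwnn p)
  have hn2 : 0 ≤ |f q| * wf q := mul_nonneg (abs_nonneg _) (hwnn q)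
  have hn3 : 0 ≤ (A/2) * V + D * It :=
    add_nonneg (mul_nonneg (by linarith) hVnn) (mul_nonneg hD hItnn)
  have harith : |f p| * wf p + ((A/2) * V + D * It + |f q| * wf q)
      ≤ A * V + (D + 2/(q - p)) * It := by nlinarith
  rcases hsign with hpos | hneg
  -- ===================== increasing case =====================
  · have hmono : StrictMonoOn Tb (Icc p q) := by
      apply strictMonoOn_of_hasDerivWithinAt_pos (convex_Icc p q) hcont
        (f' := φ)
        (fun x hx => ((hTdiff x (interior_subset hx)).hasDerivWithinAt).mono interior_subset)
      intro x hx
      have := hpos x (interior_subset hx)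
      linarith
    set c : ℝ := Tb p with hcdef
    set d : ℝ := Tb q with hddef
    have hcd : c < d := hmono hpmem hqmem hpq
    have himg : Tb '' Ico p q = Ico c d := by
      apply Subset.antisymm
      · rintro _ ⟨x, hx, rfl⟩
        exact ⟨hmono.monotoneOn hpmem ⟨hx.1, hx.2.le⟩ hx.1,
          hmono ⟨hx.1, hx.2.le⟩ hqmem hx.2⟩
      · rintro y hy
        obtain ⟨x, hx, hxy⟩ := intermediate_value_Icc hpq' hcont ⟨hy.1, hy.2.le⟩
        have hxq : x ≠ q := by
          intro h
          rw [h] at hxy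
          have h2 : y < d := hy.2
          rw [← hxy, ← hddef] at h2
          exact lt_irrefl _ h2
        exact ⟨x, ⟨hx.1, lt_of_le_of_ne hx.2 hxq⟩, hxy⟩
    have h0c : (0:ℝ) ≤ c := hTbp01.1
    have hd1 : d ≤ 1 := hTbq01.2
    have hSval : ∀ y ∈ Icc c d, Sb y ∈ Icc p q ∧ Tb (Sb y) = y := by
      intro y hy
      obtain ⟨x, hx, hxy⟩ := intermediate_value_Icc hpq' hcont hy
      have : Sb y = x := by rw [← hxy, hS x hx]
      rw [this, hxy]
      exact ⟨hx, rfl⟩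
    have hSmono : MonotoneOn Sb (Icc c d) := by
      intro y₁ h₁ y₂ h₂ h12
      by_contra hlt
      push_neg at hlt
      have := hmono (hSval y₂ h₂).1 (hSval y₁ h₁).1 hlt
      rw [(hSval y₂ h₂).2, (hSval y₁ h₁).2] at this
      linarith
    have hSc : Sb c = p := hS p hpmem
    have hSd : Sb d = q := hS q hqmem
    -- split
    have e1 : eVariationOn g (Icc 0 c) + eVariationOn g (Icc c d) = eVariationOn g (Icc 0 d) :=
      Icc_add_Icc' g h0c hcd.le
    have e2 : eVariationOn g (Icc 0 d) + eVariationOn g (Icc d 1) = eVariationOn g (Icc 0 1) :=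
      Icc_add_Icc' g (le_trans h0c hcd.le) hd1
    have hsplit : eVariationOn g (Icc 0 1)
        = eVariationOn g (Icc 0 c) + eVariationOn g (Icc c d) + eVariationOn g (Icc d 1) := by
      rw [e1, e2]
    -- piece 1
    have P1 : eVariationOn g (Icc 0 c) ≤ ENNReal.ofReal (|f p| * wf p) := by
      have h0 : ∀ x ∈ Icc (0:ℝ) c, x ≠ c → g x = 0 := by
        intro x hx hxc
        apply indicator_of_notMem
        rw [himg]
        intro hmem
        exact hxc (le_antisymm hx.2 hmem.1)
      have hgc : g c = f p * wf p := by
        have hcmem : c ∈ Tb '' Ico p q := by rw [himg]; exact ⟨le_rfl, hcd⟩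
        rw [hgdef, indicator_of_mem hcmem, hSc, div_eq_mul_inv]
      refine (evar_jump_greatest g (Icc 0 c) c (fun x hx => hx.2) h0).trans_eq ?_
      rw [hgc, abs_mul, abs_of_nonneg (hwnn p)]
    -- piece 3
    have P3 : eVariationOn g (Icc d 1) = 0 := by
      apply evar_zero_on
      intro x hx
      apply indicator_of_notMem
      rw [himg]
      intro hmem
      exact absurd hmem.2 (not_lt.mpr hx.1)
    -- piece 2
    have P2 : eVariationOn g (Icc c d) ≤
        ENNReal.ofReal ((A/2) * V + D * It) + ENNReal.ofReal (|f q| * wf q) := by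
      set E : ℝ → ℝ := fun y => g y - G y with hEdef
      have hgE : EqOn g (fun y => G y + E y) (Icc c d) := by
        intro y _
        simp [hEdef]
      rw [eVariationOn.eq_of_eqOn hgE]
      refine (evar_add_le G E (Icc c d)).trans (add_le_add ?_ ?_)
      · -- variation of G
        refine le_trans (eVariationOn.comp_le_of_monotoneOn _ Sb hSmono
          (fun y hy => (hSval y hy).1)) hmul
      · -- variation of E
        have h0 : ∀ x ∈ Icc c d, x ≠ d → E x = 0 := by
          intro x hx hxd
          have hxmem : x ∈ Tb '' Ico p q := by
            rw [himg]
            exact ⟨hx.1, lt_of_le_of_ne hx.2 hxd⟩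
          simp only [hEdef, hgdef, hGdef]
          rw [indicator_of_mem hxmem, div_eq_mul_inv]
          simp [Function.comp, hwfdef]
        have hEd : E d = -(f q * wf q) := by
          have hdnot : d ∉ Tb '' Ico p q := by
            rw [himg]
            intro hmem
            exact absurd hmem.2 (lt_irrefl d)
          simp only [hEdef, hgdef, hGdef]
          rw [indicator_of_notMem hdnot]
          simp [Function.comp, hSd]
        refine (evar_jump_greatest E (Icc c d) d (fun x hx => hx.2) h0).trans_eq ?_
        rw [hEd, abs_neg, abs_mul, abs_of_nonneg (hwnn q)]
    calc eVariationOn g (Icc 0 1)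
        = eVariationOn g (Icc 0 c) + eVariationOn g (Icc c d) + eVariationOn g (Icc d 1) := hsplit
      _ ≤ ENNReal.ofReal (|f p| * wf p)
          + (ENNReal.ofReal ((A/2) * V + D * It) + ENNReal.ofReal (|f q| * wf q)) + 0 := by
          exact add_le_add (add_le_add P1 P2) (le_of_eq P3)
      _ = ENNReal.ofReal (|f p| * wf p + ((A/2) * V + D * It + |f q| * wf q)) := by
          rw [add_zero, ← ENNReal.ofReal_add hn3 hn2, ← ENNReal.ofReal_add hn1 (by linarith)]
      _ ≤ ENNReal.ofReal (A * V + (D + 2/(q - p)) * It) := ENNReal.ofReal_le_ofReal harith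
  -- ===================== decreasing case =====================
  · have hanti : StrictAntiOn Tb (Icc p q) := by
      apply strictAntiOn_of_hasDerivWithinAt_neg (convex_Icc p q) hcont
        (f' := φ)
        (fun x hx => ((hTdiff x (interior_subset hx)).hasDerivWithinAt).mono interior_subset)
      intro x hx
      have := hneg x (interior_subset hx)
      linarith
    set c : ℝ := Tb q with hcdef
    set d : ℝ := Tb p with hddef
    have hcd : c < d := hanti hpmem hqmem hpq
    have himg : Tb '' Ico p q = Ioc c d := by
      apply Subset.antisymm
      · rintro _ ⟨x, hx, rfl⟩
        exact ⟨hanti ⟨hx.1, hx.2.le⟩ hqmem hx.2,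
          hanti.antitoneOn hpmem ⟨hx.1, hx.2.le⟩ hx.1⟩
      · rintro y hy
        obtain ⟨x, hx, hxy⟩ := intermediate_value_Icc' hpq' hcont ⟨hy.1.le, hy.2⟩
        have hxq : x ≠ q := by
          intro h
          rw [h] at hxy
          have h2 : c < y := hy.1
          rw [← hxy, ← hcdef] at h2
          exact lt_irrefl _ h2
        exact ⟨x, ⟨hx.1, lt_of_le_of_ne hx.2 hxq⟩, hxy⟩
    have h0c : (0:ℝ) ≤ c := hTbq01.1
    have hd1 : d ≤ 1 := hTbp01.2.le
    have hSval : ∀ y ∈ Icc c d, Sb y ∈ Icc p q ∧ Tb (Sb y) = y := by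
      intro y hy
      obtain ⟨x, hx, hxy⟩ := intermediate_value_Icc' hpq' hcont hy
      have : Sb y = x := by rw [← hxy, hS x hx]
      rw [this, hxy]
      exact ⟨hx, rfl⟩
    have hSanti : AntitoneOn Sb (Icc c d) := by
      intro y₁ h₁ y₂ h₂ h12
      by_contra hlt
      push_neg at hlt
      have := hanti (hSval y₁ h₁).1 (hSval y₂ h₂).1 hlt
      rw [(hSval y₂ h₂).2, (hSval y₁ h₁).2] at this
      linarith
    have hSc : Sb c = q := hS q hqmem
    have hSd : Sb d = p := hS p hpmem
    have e1 : eVariationOn g (Icc 0 c) + eVariationOn g (Icc c d) = eVariationOn g (Icc 0 d) :=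
      Icc_add_Icc' g h0c hcd.le
    have e2 : eVariationOn g (Icc 0 d) + eVariationOn g (Icc d 1) = eVariationOn g (Icc 0 1) :=
      Icc_add_Icc' g (le_trans h0c hcd.le) hd1
    have hsplit : eVariationOn g (Icc 0 1)
        = eVariationOn g (Icc 0 c) + eVariationOn g (Icc c d) + eVariationOn g (Icc d 1) := by
      rw [e1, e2]
    -- piece 1 : zero on [0,c]
    have P1 : eVariationOn g (Icc 0 c) = 0 := by
      apply evar_zero_on
      intro x hx
      apply indicator_of_notMem
      rw [himg]
      intro hmem
      exact absurd hmem.1 (not_lt.mpr hx.2)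
    -- piece 3 : jump at e₂ = d on [d,1]
    have P3 : eVariationOn g (Icc d 1) ≤ ENNReal.ofReal (|f p| * wf p) := by
      have h0 : ∀ x ∈ Icc d 1, x ≠ d → g x = 0 := by
        intro x hx hxd
        apply indicator_of_notMem
        rw [himg]
        intro hmem
        exact hxd (le_antisymm hmem.2 hx.1)
      have hgd : g d = f p * wf p := by
        have hdmem : d ∈ Tb '' Ico p q := by rw [himg]; exact ⟨hcd, le_rfl⟩
        rw [hgdef, indicator_of_mem hdmem, hSd, div_eq_mul_inv]
      refine (evar_jump_least g (Icc d 1) d (fun x hx => hx.1) h0).trans_eq ?_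
      rw [hgd, abs_mul, abs_of_nonneg (hwnn p)]
    -- piece 2
    have P2 : eVariationOn g (Icc c d) ≤
        ENNReal.ofReal ((A/2) * V + D * It) + ENNReal.ofReal (|f q| * wf q) := by
      set E : ℝ → ℝ := fun y => g y - G y with hEdef
      have hgE : EqOn g (fun y => G y + E y) (Icc c d) := by
        intro y _
        simp [hEdef]
      rw [eVariationOn.eq_of_eqOn hgE]
      refine (evar_add_le G E (Icc c d)).trans (add_le_add ?_ ?_)
      · refine le_trans (eVariationOn.comp_le_of_antitoneOn _ Sb hSanti
          (fun y hy => (hSval y hy).1)) hmul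
      · have h0 : ∀ x ∈ Icc c d, x ≠ c → E x = 0 := by
          intro x hx hxc
          have hxmem : x ∈ Tb '' Ico p q := by
            rw [himg]
            exact ⟨lt_of_le_of_ne hx.1 (Ne.symm hxc), hx.2⟩
          simp only [hEdef, hgdef, hGdef]
          rw [indicator_of_mem hxmem, div_eq_mul_inv]
          simp [Function.comp, hwfdef]
        have hEc : E c = -(f q * wf q) := by
          have hcnot : c ∉ Tb '' Ico p q := by
            rw [himg]
            intro hmem
            exact absurd hmem.1 (lt_irrefl c)
          simp only [hEdef, hgdef, hGdef]
          rw [indicator_of_notMem hcnot]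
          simp [Function.comp, hSc]
        refine (evar_jump_least E (Icc c d) c (fun x hx => hx.1) h0).trans_eq ?_
        rw [hEc, abs_neg, abs_mul, abs_of_nonneg (hwnn q)]
    calc eVariationOn g (Icc 0 1)
        = eVariationOn g (Icc 0 c) + eVariationOn g (Icc c d) + eVariationOn g (Icc d 1) := hsplit
      _ ≤ 0 + (ENNReal.ofReal ((A/2) * V + D * It) + ENNReal.ofReal (|f q| * wf q))
          + ENNReal.ofReal (|f p| * wf p) := by
          exact add_le_add (add_le_add (le_of_eq P1) P2) P3
      _ = ENNReal.ofReal (|f p| * wf p + ((A/2) * V + D * It + |f q| * wf q)) := by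
          rw [zero_add, ← ENNReal.ofReal_add hn3 hn2,
            ← ENNReal.ofReal_add (add_nonneg hn3 hn2) hn1]
          rw [show (A/2) * V + D * It + |f q| * wf q + |f p| * wf p
            = |f p| * wf p + ((A/2) * V + D * It + |f q| * wf q) by ring]
      _ ≤ ENNReal.ofReal (A * V + (D + 2/(q - p)) * It) := ENNReal.ofReal_le_ofReal harith
end LY
open LY


/-- Var–L¹ Lasota–Yorke inequality for a piecewise `C²`, piecewise expanding map of
`[0,1]` with expansion `|T'| > 2` and distortion bounded by `D`:
`Var(L f) ≤ A Var(f) + B ‖f‖_{L¹}` with `A = sup_x 2/|T'(x)|` and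
`B = max_k 2/|P_k| + D`. -/
theorem var_L1_lasota_yorke
    (b : ℕ) (hb : 1 ≤ b) (a : ℕ → ℝ)
    (ha0 : a 0 = 0) (hab : a b = 1)
    (hmono : ∀ k, k < b → a k < a (k + 1))
    (T : ℝ → ℝ) (hT : MapsTo T (Ico 0 1) (Ico 0 1))
    (Tk Sk : ℕ → ℝ → ℝ) (D : ℝ)
    (hTeq : ∀ k, k < b → ∀ x ∈ Ico (a k) (a (k + 1)), T x = Tk k x)
    (hTkC2 : ∀ k, k < b → ContDiffOn ℝ 2 (Tk k) (Icc (a k) (a (k + 1))))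
    (hTkInj : ∀ k, k < b → InjOn (Tk k) (Icc (a k) (a (k + 1))))
    (hTkExp : ∀ k, k < b → ∀ x ∈ Icc (a k) (a (k + 1)),
      2 < |derivWithin (Tk k) (Icc (a k) (a (k + 1))) x|)
    (hTkDist : ∀ k, k < b → ∀ x ∈ Icc (a k) (a (k + 1)),
      |derivWithin (derivWithin (Tk k) (Icc (a k) (a (k + 1)))) (Icc (a k) (a (k + 1))) x /
        (derivWithin (Tk k) (Icc (a k) (a (k + 1))) x) ^ 2| ≤ D)
    (hSk : ∀ k, k < b → ∀ x ∈ Icc (a k) (a (k + 1)), Sk k (Tk k x) = x)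
    (L : (ℝ → ℝ) → ℝ → ℝ)
    (hL : ∀ f x, L f x = ∑ k ∈ Finset.range b,
      (Tk k '' Ico (a k) (a (k + 1))).indicator
        (fun y => f (Sk k y) / |derivWithin (Tk k) (Icc (a k) (a (k + 1))) (Sk k y)|) x)
    (A B : ℝ)
    (hA : A = ⨆ k ∈ Finset.range b, ⨆ x ∈ Icc (a k) (a (k + 1)),
      2 / |derivWithin (Tk k) (Icc (a k) (a (k + 1))) x|)
    (hB : B = (⨆ k ∈ Finset.range b, 2 / (a (k + 1) - a k)) + D)
    (f : ℝ → ℝ) (hfBV : BoundedVariationOn f (Icc 0 1))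
    (hfInt : IntegrableOn f (Icc 0 1)) :
    eVariationOn (L f) (Icc 0 1) ≤
      ENNReal.ofReal (A * (eVariationOn f (Icc 0 1)).toReal +
        B * ∫ x in Icc (0 : ℝ) 1, |f x|) := by
  classical
  -- monotonicity of the partition points
  have hle' : ∀ i j, i ≤ j → j ≤ b → a i ≤ a j := by
    intro i j
    induction j with
    | zero =>
        intro hij _
        have : i = 0 := Nat.le_zero.mp hij
        rw [this]
    | succ m ih =>
        intro hij hjb
        rcases Nat.lt_or_ge i (m+1) with h | h
        · exact le_trans (ih (by omega) (by omega)) (hmono m (by omega)).le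
        · have : i = m + 1 := by omega
          rw [this]
  have hsub01 : ∀ k, k < b → Icc (a k) (a (k+1)) ⊆ Icc (0:ℝ) 1 := by
    intro k hk
    refine Icc_subset_Icc ?_ ?_
    · rw [← ha0]; exact hle' 0 k (by omega) (by omega)
    · rw [← hab]; exact hle' (k+1) b (by omega) le_rfl
  have hfvk : ∀ k, k < b → BoundedVariationOn f (Icc (a k) (a (k+1))) :=
    fun k hk => hfBV.mono (hsub01 k hk)
  have hfik : ∀ k, k < b → IntegrableOn f (Icc (a k) (a (k+1))) :=
    fun k hk => hfInt.mono_set (hsub01 k hk)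
  have hmapsk : ∀ k, k < b → ∀ x ∈ Ico (a k) (a (k+1)), Tk k x ∈ Ico (0:ℝ) 1 := by
    intro k hk x hx
    have hx01 : x ∈ Ico (0:ℝ) 1 := by
      constructor
      · rw [← ha0]; exact le_trans (hle' 0 k (by omega) (by omega)) hx.1
      · rw [← hab]; exact lt_of_lt_of_le hx.2 (hle' (k+1) b (by omega) le_rfl)
    rw [← hTeq k hk x hx]
    exact hT hx01
  -- positivity of D and A
  have hD0 : 0 ≤ D := by
    refine le_trans (abs_nonneg _) (hTkDist 0 (by omega) (a 0) ⟨le_rfl, (hmono 0 (by omega)).le⟩)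
  -- bound : for each k < b and x in the branch interval, 2/|T'| ≤ A
  have hunder1 : ∀ k, k < b → ∀ x ∈ Icc (a k) (a (k+1)),
      2 / |derivWithin (Tk k) (Icc (a k) (a (k+1))) x| ≤ 1 := by
    intro k hk x hx
    have h2 := hTkExp k hk x hx
    rw [div_le_one (by linarith)]
    linarith
  have hinner_le_one : ∀ k, k < b →
      (⨆ x ∈ Icc (a k) (a (k+1)), 2 / |derivWithin (Tk k) (Icc (a k) (a (k+1))) x|) ≤ 1 := by
    intro k hk
    refine Real.iSup_le (fun t => ?_) zero_le_one
    by_cases ht : t ∈ Icc (a k) (a (k+1))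
    · rw [ciSup_pos ht]; exact hunder1 k hk t ht
    · haveI : IsEmpty (t ∈ Icc (a k) (a (k+1))) := ⟨ht⟩
      rw [Real.iSup_of_isEmpty]; norm_num
  have hAk : ∀ k, k < b → ∀ x ∈ Icc (a k) (a (k+1)),
      2 / |derivWithin (Tk k) (Icc (a k) (a (k+1))) x| ≤ A := by
    intro k hk x hx
    rw [hA]
    have hinner_bdd : BddAbove (Set.range (fun t =>
        ⨆ _ : t ∈ Icc (a k) (a (k+1)), 2 / |derivWithin (Tk k) (Icc (a k) (a (k+1))) t|)) := by
      refine ⟨1, ?_⟩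
      rintro _ ⟨t, rfl⟩
      dsimp only
      by_cases ht : t ∈ Icc (a k) (a (k+1))
      · rw [ciSup_pos ht]; exact hunder1 k hk t ht
      · haveI : IsEmpty (t ∈ Icc (a k) (a (k+1))) := ⟨ht⟩
        rw [Real.iSup_of_isEmpty]; norm_num
    have step1 : 2 / |derivWithin (Tk k) (Icc (a k) (a (k+1))) x|
        ≤ ⨆ t ∈ Icc (a k) (a (k+1)), 2 / |derivWithin (Tk k) (Icc (a k) (a (k+1))) t| := by
      refine le_ciSup_of_le hinner_bdd x ?_
      rw [ciSup_pos hx]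
    refine le_trans step1 ?_
    have houter_bdd : BddAbove (Set.range (fun j =>
        ⨆ _ : j ∈ Finset.range b, ⨆ x ∈ Icc (a j) (a (j+1)),
          2 / |derivWithin (Tk j) (Icc (a j) (a (j+1))) x|)) := by
      refine ⟨1, ?_⟩
      rintro _ ⟨j, rfl⟩
      dsimp only
      by_cases hj : j ∈ Finset.range b
      · rw [ciSup_pos hj]; exact hinner_le_one j (Finset.mem_range.mp hj)
      · haveI : IsEmpty (j ∈ Finset.range b) := ⟨hj⟩
        rw [Real.iSup_of_isEmpty]; norm_num
    refine le_ciSup_of_le houter_bdd k ?_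
    rw [ciSup_pos (Finset.mem_range.mpr hk)]
  have hA0 : 0 ≤ A := by
    refine le_trans ?_ (hAk 0 (by omega) (a 0) ⟨le_rfl, (hmono 0 (by omega)).le⟩)
    positivity
  -- bound for the length part of B
  set C : ℝ := ⨆ k ∈ Finset.range b, 2 / (a (k + 1) - a k) with hC
  have hCk : ∀ k, k < b → 2 / (a (k+1) - a k) ≤ C := by
    intro k hk
    have hbne : (Finset.range b).Nonempty := Finset.nonempty_range_iff.mpr (by omega)
    set Mx : ℝ := (Finset.range b).sup' hbne (fun j => 2 / (a (j + 1) - a j)) with hMx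
    have hbdd : BddAbove (Set.range (fun j =>
        ⨆ _ : j ∈ Finset.range b, 2 / (a (j + 1) - a j))) := by
      refine ⟨Mx ⊔ 0, ?_⟩
      rintro _ ⟨j, rfl⟩
      dsimp only
      by_cases hj : j ∈ Finset.range b
      · rw [ciSup_pos hj]
        refine le_sup_of_le_left ?_
        rw [hMx]
        exact Finset.le_sup' (fun j => 2 / (a (j + 1) - a j)) hj
      · haveI : IsEmpty (j ∈ Finset.range b) := ⟨hj⟩
        rw [Real.iSup_of_isEmpty]
        exact le_sup_right
    refine le_ciSup_of_le hbdd k ?_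
    rw [ciSup_pos (Finset.mem_range.mpr hk)]
  have hC0 : 0 < C := by
    refine lt_of_lt_of_le ?_ (hCk 0 (by omega))
    have h01 : a 0 < a 1 := hmono 0 (by omega)
    have : (0:ℝ) < a 1 - a 0 := by linarith
    exact div_pos (by norm_num) this
  -- branch bounds
  have hbranch : ∀ k, k < b →
      eVariationOn ((Tk k '' Ico (a k) (a (k + 1))).indicator
        (fun y => f (Sk k y) / |derivWithin (Tk k) (Icc (a k) (a (k + 1))) (Sk k y)|)) (Icc 0 1) ≤
      ENNReal.ofReal (A * (eVariationOn f (Icc (a k) (a (k+1)))).toReal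
        + (D + C) * ∫ t in Icc (a k) (a (k+1)), |f t|) := by
    intro k hk
    refine le_trans (branch_bound f (hmono k hk) (Tk k) (Sk k)
      (hTkC2 k hk) (hTkExp k hk) (hTkDist k hk) (hSk k hk) (hmapsk k hk)
      (hAk k hk) hD0 (hfvk k hk) (hfik k hk)) ?_
    apply ENNReal.ofReal_le_ofReal
    have hIk : 0 ≤ ∫ t in Icc (a k) (a (k+1)), |f t| :=
      setIntegral_nonneg measurableSet_Icc (fun t _ => abs_nonneg _)
    have := mul_le_mul_of_nonneg_right (add_le_add_left (hCk k hk) D) hIk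
    linarith
  -- rewriting L f as a finite sum and bounding the variation
  have hLfun : L f = fun x => ∑ k ∈ Finset.range b,
      (Tk k '' Ico (a k) (a (k + 1))).indicator
        (fun y => f (Sk k y) / |derivWithin (Tk k) (Icc (a k) (a (k + 1))) (Sk k y)|) x :=
    funext (hL f)
  -- extended partition sequence
  set v : ℕ → ℝ := fun k => a (min k b) with hv
  have hvmono : Monotone v := by
    intro i j hij
    simp only [hv]
    exact hle' _ _ (min_le_min_right b hij) (min_le_right _ _)
  have hvk : ∀ k, k ≤ b → v k = a k := by
    intro k hk; simp only [hv, min_eq_left hk]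
  -- sum of branch variations of f
  have hVsum : ∑ k ∈ Finset.range b, (eVariationOn f (Icc (a k) (a (k+1)))).toReal
      ≤ (eVariationOn f (Icc 0 1)).toReal := by
    have hE : ∑ k ∈ Finset.range b, eVariationOn f (Icc (v k) (v (k+1)))
        ≤ eVariationOn f (Icc 0 1) := by
      refine sum_evar_Icc_le f hvmono b ?_ ?_
      · rw [hvk 0 (by omega), ha0]
      · rw [hvk b le_rfl, hab]
    have hcongr : ∀ k ∈ Finset.range b,
        eVariationOn f (Icc (v k) (v (k+1))) = eVariationOn f (Icc (a k) (a (k+1))) := by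
      intro k hk
      have hk' := Finset.mem_range.mp hk
      rw [hvk k (by omega), hvk (k+1) (by omega)]
    rw [Finset.sum_congr rfl hcongr] at hE
    have hne : ∀ k ∈ Finset.range b, eVariationOn f (Icc (a k) (a (k+1))) ≠ ⊤ :=
      fun k hk => hfvk k (Finset.mem_range.mp hk)
    rw [show (∑ k ∈ Finset.range b, (eVariationOn f (Icc (a k) (a (k+1)))).toReal)
        = (∑ k ∈ Finset.range b, eVariationOn f (Icc (a k) (a (k+1)))).toReal from
        (ENNReal.toReal_sum hne).symm]
    exact ENNReal.toReal_mono hfBV hE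
  -- sum of branch integrals of |f|
  have hIsum : ∑ k ∈ Finset.range b, (∫ t in Icc (a k) (a (k+1)), |f t|)
      ≤ ∫ x in Icc (0:ℝ) 1, |f x| := by
    have hii : ∀ k < b, IntervalIntegrable (fun t => |f t|) volume (v k) (v (k+1)) := by
      intro k hk
      have h1 : IntegrableOn (fun t => |f t|) (Icc (v k) (v (k+1))) := by
        rw [hvk k (by omega), hvk (k+1) (by omega)]
        exact (hfik k hk).abs
      have h2 : Set.uIcc (v k) (v (k+1)) = Icc (v k) (v (k+1)) :=
        uIcc_of_le (hvmono (Nat.le_succ k))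
      exact (h2 ▸ h1).intervalIntegrable
    have hadj := intervalIntegral.sum_integral_adjacent_intervals hii
    have hIceq : ∀ k ∈ Finset.range b, (∫ t in Icc (a k) (a (k+1)), |f t|)
        = ∫ t in (v k)..(v (k+1)), |f t| := by
      intro k hk
      have hk' := Finset.mem_range.mp hk
      rw [hvk k (by omega), hvk (k+1) (by omega),
        intervalIntegral.integral_of_le (hmono k hk').le]
      exact integral_Icc_eq_integral_Ioc
    rw [Finset.sum_congr rfl hIceq, hadj, hvk 0 (by omega), hvk b le_rfl, ha0, hab,
      intervalIntegral.integral_of_le (zero_le_one), integral_Icc_eq_integral_Ioc]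
  have hItot : 0 ≤ ∫ x in Icc (0:ℝ) 1, |f x| :=
    setIntegral_nonneg measurableSet_Icc (fun t _ => abs_nonneg _)
  -- final assembly
  rw [hLfun]
  refine le_trans (evar_sum_le _ (Icc 0 1) (Finset.range b)) ?_
  refine le_trans (Finset.sum_le_sum (fun k hk => hbranch k (Finset.mem_range.mp hk))) ?_
  rw [← ENNReal.ofReal_sum_of_nonneg]
  · apply ENNReal.ofReal_le_ofReal
    have hsum_eq : ∑ k ∈ Finset.range b, (A * (eVariationOn f (Icc (a k) (a (k+1)))).toReal
        + (D + C) * ∫ t in Icc (a k) (a (k+1)), |f t|)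
        = A * (∑ k ∈ Finset.range b, (eVariationOn f (Icc (a k) (a (k+1)))).toReal)
          + (D + C) * (∑ k ∈ Finset.range b, ∫ t in Icc (a k) (a (k+1)), |f t|) := by
      rw [Finset.sum_add_distrib, Finset.mul_sum, Finset.mul_sum]
    rw [hsum_eq, hB]
    have h1 : A * (∑ k ∈ Finset.range b, (eVariationOn f (Icc (a k) (a (k+1)))).toReal)
        ≤ A * (eVariationOn f (Icc 0 1)).toReal := mul_le_mul_of_nonneg_left hVsum hA0
    have h2 : (D + C) * (∑ k ∈ Finset.range b, ∫ t in Icc (a k) (a (k+1)), |f t|)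
        ≤ (D + C) * ∫ x in Icc (0:ℝ) 1, |f x| :=
      mul_le_mul_of_nonneg_left hIsum (by linarith)
    have : (C + D) * ∫ x in Icc (0:ℝ) 1, |f x| = (D + C) * ∫ x in Icc (0:ℝ) 1, |f x| := by ring
    rw [this]
    linarith
  · intro k hk
    have hk' := Finset.mem_range.mp hk
    have hIk : 0 ≤ ∫ t in Icc (a k) (a (k+1)), |f t| :=
      setIntegral_nonneg measurableSet_Icc (fun t _ => abs_nonneg _)
    have hVk : (0:ℝ) ≤ (eVariationOn f (Icc (a k) (a (k+1)))).toReal := ENNReal.toReal_nonneg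
    have : 0 ≤ D + C := by linarith
    positivity
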